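/- Let n ≥ 1 and let a be a signed permutation on [n]. On the set [n]± ∪ {−(n+1)}, let θ₂ be the fixed-point-free involution (0, −1)(1, −2)⋯(n, −n−1), and let θ₁ be the fixed-point-free involution (b₀, b₁)(b₂, b₃)⋯(b_{2n}, b_{2n+1}), where b₀ = 0, b_{2k−1} = −a_k and b_{2k} = a_k for 1 ≤ k ≤ n, and b_{2n+1} = −(n+1). Then the reversal distance of a satisfies d_r(a) ≥ (2n + 2 − C(θ₁ ∘ θ₂)) / 2. -/

import Mathlib

/-- Number of cycles of a permutation of a finite set, fixed points counting as 1-cycles. -/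
def cycleCount {α : Type*} [Fintype α] [DecidableEq α] (π : Equiv.Perm α) : ℕ :=
  π.cycleType.card + (Finset.univ.filter fun x => π x = x).card

/-- The set `[n]± ∪ {-(n+1)} = {-(n+1), -n, …, -1, 0, 1, …, n}` of integers. -/
abbrev Jpm (n : ℕ) : Type := {j : ℤ // j ∈ Finset.Icc (-(n : ℤ) - 1) (n : ℤ)}

/-- The sequence `b = b₀, …, b_{2n+1}` with `b₀ = 0`, `b_{2k-1} = -a_k`, `b_{2k} = a_k`
for `1 ≤ k ≤ n`, and `b_{2n+1} = -(n+1)`. -/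
def bseq (n : ℕ) (a : ℕ → ℤ) (k : ℕ) : ℤ :=
  if k = 0 then 0
  else if k = 2 * n + 1 then -((n : ℤ) + 1)
  else if k % 2 = 1 then -a ((k + 1) / 2)
  else a (k / 2)

/-- `a₁, …, aₙ` is a signed permutation on `[n]`:
`|a₁|, …, |aₙ|` is a permutation of `1, …, n`. -/
def IsSignedPerm (n : ℕ) (a : ℕ → ℤ) : Prop :=
  (Finset.Icc 1 n).image (fun k => |a k|) = Finset.Icc (1 : ℤ) (n : ℤ)

/-- The reversal `ρ_{i,j}` acting on the sequence `a`: it sends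
`a` to `a₁, …, a_{i-1}, -a_j, …, -a_i, a_{j+1}, …, aₙ`. -/
def reversal (i j : ℕ) (a : ℕ → ℤ) : ℕ → ℤ :=
  fun k => if i ≤ k ∧ k ≤ j then -a (i + j - k) else a k

/-- `a` can be transformed into the identity `1, 2, …, n` by `d` reversals. -/
def SortsIn (n : ℕ) (a : ℕ → ℤ) (d : ℕ) : Prop :=
  ∃ l : List (ℕ × ℕ), l.length = d ∧
    (∀ q ∈ l, 1 ≤ q.1 ∧ q.1 ≤ q.2 ∧ q.2 ≤ n) ∧
    ∀ k, 1 ≤ k → k ≤ n → (l.foldl (fun f q => reversal q.1 q.2 f) a) k = (k : ℤ)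

open Equiv Equiv.Perm
set_option linter.unusedSectionVars false

section CC
variable {α : Type*} [Fintype α] [DecidableEq α]

/-- The same-cycle setoid of a permutation. -/
def scSetoid (π : Perm α) : Setoid α :=
  ⟨π.SameCycle, ⟨fun x => SameCycle.refl π x, fun h => h.symm, fun h h' => h.trans h'⟩⟩

private lemma sc_fix {π : Perm α} {x y : α} (h : π.SameCycle x y) (hx : π x = x) : y = x := by
  obtain ⟨i, hi⟩ := h
  rw [← hi, zpow_apply_eq_self_of_apply_eq_self hx]

private noncomputable def cycRep (π : Perm α) (x : α) :
    ↥π.cycleFactorsFinset ⊕ {z : α // π z = z} := by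
  classical
  exact if h : π x = x then Sum.inr ⟨x, h⟩
  else Sum.inl ⟨π.cycleOf x, cycleOf_mem_cycleFactorsFinset_iff.2 (mem_support.2 h)⟩

theorem cycleCount_eq_ncard (π : Perm α) :
    cycleCount π = Nat.card (Quotient (scSetoid π)) := by
  classical
  have hwd : ∀ x y : α, π.SameCycle x y → cycRep π x = cycRep π y := by
    intro x y h
    by_cases hx : π x = x
    · have hyx : y = x := sc_fix h hx
      subst hyx; rfl
    · by_cases hy : π y = y
      · exact absurd ((sc_fix h.symm hy) ▸ hy) hx
      · simp only [cycRep, dif_neg hx, dif_neg hy]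
        exact congrArg _ (Subtype.ext (SameCycle.cycleOf_eq h))
  let F : Quotient (scSetoid π) → ↥π.cycleFactorsFinset ⊕ {z : α // π z = z} :=
    Quotient.lift (cycRep π) hwd
  have hinj : Function.Injective F := by
    intro q1 q2
    refine Quotient.inductionOn₂ q1 q2 ?_
    intro x y hEq
    apply Quotient.sound
    show π.SameCycle x y
    change cycRep π x = cycRep π y at hEq
    simp only [F, Quotient.lift_mk, cycRep] at hEq
    by_cases hx : π x = x <;> by_cases hy : π y = y <;>
      simp only [dif_pos, dif_neg, hx, hy] at hEq
    · obtain rfl : x = y := by simpa using hEq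
      exact SameCycle.refl _ _
    · simp at hEq
    · simp at hEq
    · have hEq' : π.cycleOf x = π.cycleOf y := by simpa using hEq
      have hmem : y ∈ (π.cycleOf y).support :=
        mem_support_cycleOf_iff.2 ⟨SameCycle.refl _ _, mem_support.2 hy⟩
      rw [← hEq'] at hmem
      exact (mem_support_cycleOf_iff.1 hmem).1
  have hsurj : Function.Surjective F := by
    rintro (⟨c, hc⟩ | ⟨z, hz⟩)
    · have h1 := mem_cycleFactorsFinset_iff.1 hc
      obtain ⟨x, hx, -⟩ := h1.1
      have hxs : x ∈ c.support := mem_support.2 hx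
      have hπx : π x ≠ x := by rw [← h1.2 x hxs]; exact hx
      refine ⟨Quotient.mk _ x, ?_⟩
      change cycRep π x = _
      simp only [F, Quotient.lift_mk, cycRep, dif_neg hπx]
      exact congrArg _ (Subtype.ext (cycle_is_cycleOf hxs hc).symm)
    · exact ⟨Quotient.mk _ z, by change cycRep π z = _; simp [F, cycRep, dif_pos hz]⟩
  have hcard := Nat.card_eq_of_bijective F ⟨hinj, hsurj⟩
  rw [cycleCount, hcard, Nat.card_sum]
  congr 1
  · rw [Nat.card_eq_fintype_card, Fintype.card_coe, cycleType_def, Multiset.card_map]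
    rfl
  · rw [Nat.card_eq_fintype_card, Fintype.card_subtype]

theorem ncard_quot_le_of_le {s t : Setoid α} (h : ∀ x y, s.r x y → t.r x y) :
    Nat.card (Quotient t) ≤ Nat.card (Quotient s) := by
  have hsurj : Function.Surjective
      (Quotient.lift (fun a => (Quotient.mk t a))
        (fun x y hxy => Quotient.sound (h _ _ hxy)) : Quotient s → Quotient t) := by
    intro q
    obtain ⟨a, rfl⟩ := Quotient.exists_rep q
    exact ⟨Quotient.mk s a, rfl⟩
  exact Nat.card_le_card_of_surjective _ hsurj

/-- The coarsening of a setoid obtained by gluing the classes of `x` and `y`. -/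
def joinPair (s : Setoid α) (x y : α) : Setoid α where
  r u v := s.r u v ∨ (s.r u x ∧ s.r y v) ∨ (s.r u y ∧ s.r x v)
  iseqv := by
    have t := fun {a b c} => s.iseqv.trans (x := a) (y := b) (z := c)
    have sy := fun {a b} => s.iseqv.symm (x := a) (y := b)
    constructor
    · intro u; exact Or.inl (s.iseqv.refl u)
    · rintro u v (h | ⟨h1, h2⟩ | ⟨h1, h2⟩)
      · exact Or.inl (sy h)
      · exact Or.inr (Or.inr ⟨sy h2, sy h1⟩)
      · exact Or.inr (Or.inl ⟨sy h2, sy h1⟩)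
    · rintro u v w (h | ⟨h1, h2⟩ | ⟨h1, h2⟩) (h' | ⟨h1', h2'⟩ | ⟨h1', h2'⟩)
      · exact Or.inl (t h h')
      · exact Or.inr (Or.inl ⟨t h h1', h2'⟩)
      · exact Or.inr (Or.inr ⟨t h h1', h2'⟩)
      · exact Or.inr (Or.inl ⟨h1, t h2 h'⟩)
      · exact Or.inl (t h1 (t (t (sy h1') (sy h2)) h2'))
      · exact Or.inl (t h1 h2')
      · exact Or.inr (Or.inr ⟨h1, t h2 h'⟩)
      · exact Or.inl (t h1 h2')
      · exact Or.inl (t h1 (t (sy (t h2 h1')) h2'))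
private lemma card_le_ne_add_one {β : Type*} [Finite β] (b : β) :
    Nat.card β ≤ Nat.card {q : β // q ≠ b} + 1 := by
  classical
  cases nonempty_fintype β
  rw [Nat.card_eq_fintype_card, Nat.card_eq_fintype_card]
  have h1 : Fintype.card {q : β // q ≠ b} = Fintype.card β - Fintype.card {q : β // q = b} :=
    Fintype.card_subtype_compl _
  have h2 : Fintype.card {q : β // q = b} = 1 := Fintype.card_subtype_eq b
  have h3 : 1 ≤ Fintype.card β := Fintype.card_pos_iff.2 ⟨b⟩
  omega

theorem ncard_le_joinPair (s : Setoid α) (x y : α) :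
    Nat.card (Quotient s) ≤ Nat.card (Quotient (joinPair s x y)) + 1 := by
  classical
  set t := joinPair s x y with ht
  have hle : ∀ u v : α, s.r u v → t.r u v := fun u v h => Or.inl h
  let f : Quotient s → Quotient t :=
    Quotient.lift (fun a => Quotient.mk t a) (fun u v h => Quotient.sound (hle u v h))
  have main : ∀ u v : α, t.r u v → Quotient.mk s u ≠ Quotient.mk s y →
      Quotient.mk s v ≠ Quotient.mk s y → s.r u v := by
    intro u v h hu hv
    rcases h with h | ⟨h1, h2⟩ | ⟨h1, h2⟩
    · exact h
    · exact absurd (Quotient.sound (s.iseqv.symm h2)) hv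
    · exact absurd (Quotient.sound h1) hu
  have hinj : Function.Injective
      (fun p : {q : Quotient s // q ≠ Quotient.mk s y} => f p.1) := by
    rintro ⟨q1, h1⟩ ⟨q2, h2⟩ hEq
    obtain ⟨u, rfl⟩ := Quotient.exists_rep q1
    obtain ⟨v, rfl⟩ := Quotient.exists_rep q2
    simp only [f, Quotient.lift_mk] at hEq
    exact Subtype.ext (Quotient.sound (main u v (Quotient.exact hEq) h1 h2))
  calc Nat.card (Quotient s) ≤ Nat.card {q : Quotient s // q ≠ Quotient.mk s y} + 1 :=
        card_le_ne_add_one _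
    _ ≤ Nat.card (Quotient t) + 1 :=
        Nat.add_le_add_right (Nat.card_le_card_of_injective _ hinj) 1

theorem cycleCount_le_swap_mul_add_one (π : Perm α) (x y : α) :
    cycleCount π ≤ cycleCount (Equiv.swap x y * π) + 1 := by
  classical
  set σ := Equiv.swap x y * π with hσ
  have hstep : ∀ z : α, (joinPair (scSetoid π) x y).r z (σ z) := by
    intro z
    by_cases h1 : π z = x
    · have hz : σ z = y := by rw [hσ]; simp [Equiv.Perm.mul_apply, h1]
      rw [hz]
      exact Or.inr (Or.inl ⟨⟨1, by rw [zpow_one]; exact h1⟩, (scSetoid π).iseqv.refl y⟩)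
    · by_cases h2 : π z = y
      · have hz : σ z = x := by rw [hσ]; simp [Equiv.Perm.mul_apply, h2]
        rw [hz]
        exact Or.inr (Or.inr ⟨⟨1, by rw [zpow_one]; exact h2⟩, (scSetoid π).iseqv.refl x⟩)
      · have hz : σ z = π z := by
          rw [hσ, Equiv.Perm.mul_apply]
          exact Equiv.swap_apply_of_ne_of_ne h1 h2
        rw [hz]
        exact Or.inl ⟨1, by rw [zpow_one]⟩
  have hpow : ∀ (i : ℕ) (u : α), (joinPair (scSetoid π) x y).r u ((σ ^ i) u) := by
    intro i u
    induction i with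
    | zero =>
        rw [pow_zero]
        exact (joinPair (scSetoid π) x y).iseqv.refl u
    | succ m ih =>
        have hs : (σ ^ (m + 1)) u = σ ((σ ^ m) u) := by
          rw [pow_succ', Equiv.Perm.mul_apply]
        rw [hs]
        exact (joinPair (scSetoid π) x y).iseqv.trans ih (hstep _)
  have hle : ∀ u v : α, (scSetoid σ).r u v → (joinPair (scSetoid π) x y).r u v := by
    intro u v h
    obtain ⟨i, -, hi⟩ := Equiv.Perm.SameCycle.exists_pow_eq' h
    rw [← hi]
    exact hpow i u
  calc cycleCount π = Nat.card (Quotient (scSetoid π)) := cycleCount_eq_ncard π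
    _ ≤ Nat.card (Quotient (joinPair (scSetoid π) x y)) + 1 := ncard_le_joinPair _ x y
    _ ≤ Nat.card (Quotient (scSetoid σ)) + 1 := Nat.add_le_add_right (ncard_quot_le_of_le hle) 1
    _ = cycleCount σ + 1 := by rw [cycleCount_eq_ncard]

theorem cycleCount_swap_mul_le (π : Perm α) (x y : α) :
    cycleCount (Equiv.swap x y * π) ≤ cycleCount π + 1 := by
  have h := cycleCount_le_swap_mul_add_one (Equiv.swap x y * π) x y
  rwa [← mul_assoc, Equiv.swap_mul_self, one_mul] at h

theorem cycleCount_mul_swap_le (π : Perm α) (x y : α) :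
    cycleCount (π * Equiv.swap x y) ≤ cycleCount π + 1 := by
  rw [Equiv.mul_swap_eq_swap_mul]
  exact cycleCount_swap_mul_le π (π x) (π y)

theorem cycleCount_one : cycleCount (1 : Perm α) = Fintype.card α := by
  classical
  rw [cycleCount, Equiv.Perm.cycleType_one]
  simp [Finset.filter_true_of_mem, Finset.card_univ]

end CC


/-- `θ` is the pairing involution `(b₀,b₁)(b₂,b₃)⋯(b_{2n},b_{2n+1})` of `a`. -/
def Pairs (n : ℕ) (a : ℕ → ℤ) (θ : Equiv.Perm (Jpm n)) : Prop :=
  ∀ k ≤ n, ∀ x y : Jpm n,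
    (x : ℤ) = bseq n a (2 * k) → (y : ℤ) = bseq n a (2 * k + 1) →
    θ x = y ∧ θ y = x

section BS
variable {n : ℕ} {a : ℕ → ℤ}

lemma bseq_zero : bseq n a 0 = 0 := by simp [bseq]

lemma bseq_last : bseq n a (2 * n + 1) = -((n : ℤ) + 1) := by
  unfold bseq; rw [if_neg (by omega), if_pos rfl]

lemma bseq_even {k : ℕ} (hk1 : 1 ≤ k) (hk2 : k ≤ n) : bseq n a (2 * k) = a k := by
  unfold bseq
  rw [if_neg (by omega), if_neg (by omega), if_neg (by omega)]
  congr 1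
  omega

lemma bseq_odd {k : ℕ} (hk : k < n) : bseq n a (2 * k + 1) = -a (k + 1) := by
  unfold bseq
  rw [if_neg (by omega), if_neg (by omega), if_pos (by omega)]
  congr 2
  omega

lemma bseq_even_congr {b : ℕ → ℤ} {k : ℕ} (hk : k ≤ n) (h : a k = b k) :
    bseq n a (2 * k) = bseq n b (2 * k) := by
  rcases Nat.eq_zero_or_pos k with rfl | hk1
  · simp [bseq]
  · rw [bseq_even hk1 hk, bseq_even hk1 hk, h]

lemma bseq_odd_congr {b : ℕ → ℤ} {k : ℕ} (hk : k ≤ n) (h : k < n → a (k + 1) = b (k + 1)) :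
    bseq n a (2 * k + 1) = bseq n b (2 * k + 1) := by
  rcases eq_or_lt_of_le hk with rfl | hk1
  · rw [bseq_last, bseq_last]
  · rw [bseq_odd hk1, bseq_odd hk1, h hk1]

variable (hs : IsSignedPerm n a)
include hs

lemma abs_bounds {k : ℕ} (hk1 : 1 ≤ k) (hk2 : k ≤ n) : 1 ≤ |a k| ∧ |a k| ≤ (n : ℤ) := by
  have : |a k| ∈ Finset.Icc (1 : ℤ) (n : ℤ) := by
    rw [← hs]
    exact Finset.mem_image_of_mem _ (Finset.mem_Icc.2 ⟨hk1, hk2⟩)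
  exact Finset.mem_Icc.1 this

lemma abs_inj {k l : ℕ} (hk1 : 1 ≤ k) (hk2 : k ≤ n) (hl1 : 1 ≤ l) (hl2 : l ≤ n)
    (h : |a k| = |a l|) : k = l := by
  have hinj : Set.InjOn (fun k => |a k|) (Finset.Icc 1 n) := by
    apply Finset.injOn_of_card_image_eq
    rw [hs, Nat.card_Icc, Int.card_Icc]
    simp
  exact hinj (Finset.mem_Icc.2 ⟨hk1, hk2⟩) (Finset.mem_Icc.2 ⟨hl1, hl2⟩) h

lemma a_ne_zero {k : ℕ} (hk1 : 1 ≤ k) (hk2 : k ≤ n) : a k ≠ 0 := by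
  have := (abs_bounds hs hk1 hk2).1
  intro h; rw [h] at this; simp at this

lemma a_eq_iff {k l : ℕ} (hk1 : 1 ≤ k) (hk2 : k ≤ n) (hl1 : 1 ≤ l) (hl2 : l ≤ n)
    (h : a k = a l) : k = l :=
  abs_inj hs hk1 hk2 hl1 hl2 (by rw [h])

lemma a_ne_neg {k l : ℕ} (hk1 : 1 ≤ k) (hk2 : k ≤ n) (hl1 : 1 ≤ l) (hl2 : l ≤ n) :
    a k ≠ -a l := by
  intro h
  have hkl : k = l := abs_inj hs hk1 hk2 hl1 hl2 (by rw [h, abs_neg])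
  subst hkl
  have := a_ne_zero hs hk1 hk2
  omega

lemma memA {k : ℕ} (hk1 : 1 ≤ k) (hk2 : k ≤ n) :
    a k ∈ Finset.Icc (-(n : ℤ) - 1) (n : ℤ) := by
  have := abs_bounds hs hk1 hk2
  rw [Finset.mem_Icc]
  rcases abs_cases (a k) with ⟨h, _⟩ | ⟨h, _⟩ <;> omega

lemma memNA {k : ℕ} (hk1 : 1 ≤ k) (hk2 : k ≤ n) :
    -a k ∈ Finset.Icc (-(n : ℤ) - 1) (n : ℤ) := by
  have := abs_bounds hs hk1 hk2
  rw [Finset.mem_Icc]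
  rcases abs_cases (a k) with ⟨h, _⟩ | ⟨h, _⟩ <;> omega

lemma bseq_mem {m : ℕ} (hm : m ≤ 2 * n + 1) :
    bseq n a m ∈ Finset.Icc (-(n : ℤ) - 1) (n : ℤ) := by
  rcases Nat.eq_zero_or_pos m with rfl | hm1
  · rw [bseq_zero, Finset.mem_Icc]; constructor <;> omega
  rcases eq_or_lt_of_le hm with rfl | hm2
  · rw [bseq_last, Finset.mem_Icc]; constructor <;> omega
  rcases Nat.even_or_odd m with ⟨k, hk⟩ | ⟨k, hk⟩
  · subst hk
    have hk1 : 1 ≤ k := by omega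
    have hk2 : k ≤ n := by omega
    rw [show k + k = 2 * k by omega, bseq_even hk1 hk2]
    exact memA hs hk1 hk2
  · subst hk
    have hk2 : k < n := by omega
    rw [bseq_odd hk2]
    exact memNA hs (by omega) (by omega)

lemma bseq_surj {t : ℤ} (h1 : -(n : ℤ) - 1 ≤ t) (h2 : t ≤ n) :
    ∃ m ≤ 2 * n + 1, bseq n a m = t := by
  by_cases ht0 : t = 0
  · exact ⟨0, by omega, by rw [bseq_zero, ht0]⟩
  by_cases htl : t = -(n : ℤ) - 1
  · exact ⟨2 * n + 1, le_refl _, by rw [bseq_last, htl]; ring⟩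
  have habs : 1 ≤ |t| ∧ |t| ≤ (n : ℤ) := by
    rcases abs_cases t with ⟨h, _⟩ | ⟨h, _⟩ <;> omega
  have : |t| ∈ Finset.Icc (1 : ℤ) (n : ℤ) := Finset.mem_Icc.2 habs
  rw [← hs, Finset.mem_image] at this
  obtain ⟨k, hk, hak⟩ := this
  rw [Finset.mem_Icc] at hk
  have : a k = t ∨ a k = -t := by
    rcases abs_cases (a k) with ⟨h, _⟩ | ⟨h, _⟩ <;> rcases abs_cases t with ⟨h', _⟩ | ⟨h', _⟩ <;>
      omega
  rcases this with h | h
  · exact ⟨2 * k, by omega, by rw [bseq_even hk.1 hk.2, h]⟩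
  · refine ⟨2 * (k - 1) + 1, by omega, ?_⟩
    rw [bseq_odd (by omega : k - 1 < n), show k - 1 + 1 = k by omega]
    omega

end BS


section PR
variable {n : ℕ} {a : ℕ → ℤ}

/-- Every element of `Jpm n` is a `bseq` value; case split on parity. -/
lemma pairs_apply (hs : IsSignedPerm n a) {θ θ' : Equiv.Perm (Jpm n)}
    (hθ : Pairs n a θ) (hθ' : Pairs n a θ') : θ = θ' := by
  apply Equiv.ext
  intro x
  obtain ⟨hx1, hx2⟩ := Finset.mem_Icc.1 x.2
  obtain ⟨m, hm, hbm⟩ := bseq_surj hs hx1 hx2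
  rcases Nat.even_or_odd m with ⟨k, hk⟩ | ⟨k, hk⟩
  · have hk2 : k ≤ n := by omega
    have hm' : m = 2 * k := by omega
    subst hm'
    set y : Jpm n := ⟨bseq n a (2 * k + 1), bseq_mem hs (by omega)⟩ with hy
    have h1 := hθ k hk2 x y hbm.symm rfl
    have h2 := hθ' k hk2 x y hbm.symm rfl
    rw [h1.1, h2.1]
  · have hk2 : k ≤ n := by omega
    have hm' : m = 2 * k + 1 := by omega
    subst hm'
    set y : Jpm n := ⟨bseq n a (2 * k), bseq_mem hs (by omega)⟩ with hy
    have h1 := hθ k hk2 y x rfl hbm.symm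
    have h2 := hθ' k hk2 y x rfl hbm.symm
    rw [h1.2, h2.2]

lemma pairs_invol (hs : IsSignedPerm n a) {θ : Equiv.Perm (Jpm n)}
    (hθ : Pairs n a θ) : ∀ x, θ (θ x) = x := by
  intro x
  obtain ⟨hx1, hx2⟩ := Finset.mem_Icc.1 x.2
  obtain ⟨m, hm, hbm⟩ := bseq_surj hs hx1 hx2
  rcases Nat.even_or_odd m with ⟨k, hk⟩ | ⟨k, hk⟩
  · have hk2 : k ≤ n := by omega
    have hm' : m = 2 * k := by omega
    subst hm'
    set y : Jpm n := ⟨bseq n a (2 * k + 1), bseq_mem hs (by omega)⟩ with hy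
    have h1 := hθ k hk2 x y hbm.symm rfl
    rw [h1.1, h1.2]
  · have hk2 : k ≤ n := by omega
    have hm' : m = 2 * k + 1 := by omega
    subst hm'
    set y : Jpm n := ⟨bseq n a (2 * k), bseq_mem hs (by omega)⟩ with hy
    have h1 := hθ k hk2 y x rfl hbm.symm
    rw [h1.2, h1.1]

/-- Reversals preserve signed permutations. -/
lemma revSigned (hs : IsSignedPerm n a) {i j : ℕ} (hi : 1 ≤ i) (hij : i ≤ j) (hj : j ≤ n) :
    IsSignedPerm n (reversal i j a) := by
  unfold IsSignedPerm at *
  set σ : ℕ → ℕ := fun k => if i ≤ k ∧ k ≤ j then i + j - k else k with hσ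
  have hσmem : ∀ k ∈ Finset.Icc 1 n, σ k ∈ Finset.Icc 1 n := by
    intro k hk
    rw [Finset.mem_Icc] at *
    simp only [hσ]
    split_ifs with h <;> omega
  have hσinv : ∀ k ∈ Finset.Icc 1 n, σ (σ k) = k := by
    intro k hk
    rw [Finset.mem_Icc] at hk
    simp only [hσ]
    split_ifs with h h2 h3 <;> omega
  have himg : (Finset.Icc 1 n).image σ = Finset.Icc 1 n := by
    apply Finset.eq_of_subset_of_card_le
    · intro t ht
      rw [Finset.mem_image] at ht
      obtain ⟨k, hk, rfl⟩ := ht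
      exact hσmem k hk
    · rw [Finset.card_image_of_injOn]
      intro u hu v hv huv
      rw [← hσinv u hu, huv, hσinv v hv]
  calc (Finset.Icc 1 n).image (fun k => |reversal i j a k|)
      = (Finset.Icc 1 n).image (fun k => |a (σ k)|) := by
        apply Finset.image_congr
        intro k hk
        rw [Finset.mem_coe, Finset.mem_Icc] at hk
        simp only [reversal, hσ]
        split_ifs with h
        · rw [abs_neg]
        · rfl
    _ = ((Finset.Icc 1 n).image σ).image (fun k => |a k|) := by
        rw [Finset.image_image]; rfl
    _ = Finset.Icc (1 : ℤ) (n : ℤ) := by rw [himg, hs]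

/-- The key step: conjugating the pairing by the swap of `-aᵢ` and `aⱼ`
gives the pairing of the reversed sequence. -/
lemma pairs_step (hs : IsSignedPerm n a) {i j : ℕ} (hi : 1 ≤ i) (hij : i ≤ j) (hj : j ≤ n)
    {θ : Equiv.Perm (Jpm n)} (hθ : Pairs n a θ) (v w : Jpm n)
    (hv : (v : ℤ) = -a i) (hw : (w : ℤ) = a j) :
    Pairs n (reversal i j a) (Equiv.swap v w * θ * Equiv.swap v w) := by
  set a' := reversal i j a with ha'
  set c := Equiv.swap v w with hc
  -- helper inequalities
  have hane : ∀ k l, 1 ≤ k → k ≤ n → 1 ≤ l → l ≤ n → a k ≠ -a l := fun k l h1 h2 h3 h4 =>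
    a_ne_neg hs h1 h2 h3 h4
  have habs := fun {k} (h1 : 1 ≤ k) (h2 : k ≤ n) => abs_bounds hs h1 h2
  -- `bseq n a (2k)` avoids the swapped values when k ∉ [i,j]
  have hne_even : ∀ k, k ≤ n → (k < i ∨ j < k) →
      bseq n a (2 * k) ≠ -a i ∧ bseq n a (2 * k) ≠ a j := by
    intro k hk hout
    rcases Nat.eq_zero_or_pos k with rfl | hk1
    · rw [show 2 * 0 = 0 by rfl, bseq_zero]
      have h1 := a_ne_zero hs hi (le_trans hij hj)
      have h2 := a_ne_zero hs (le_trans hi hij) hj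
      constructor <;> intro h <;> omega
    · rw [bseq_even hk1 hk]
      constructor
      · exact hane k i hk1 hk hi (le_trans hij hj)
      · intro h
        have := a_eq_iff hs hk1 hk (le_trans hi hij) hj h
        omega
  have hne_odd : ∀ k, k ≤ n → (k + 1 < i ∨ j < k + 1) →
      bseq n a (2 * k + 1) ≠ -a i ∧ bseq n a (2 * k + 1) ≠ a j := by
    intro k hk hout
    rcases eq_or_lt_of_le hk with rfl | hkn
    · rw [bseq_last]
      have h1 := (habs hi (le_trans hij hj)).2
      have h2 := (habs (le_trans hi hij) hj).2
      rcases abs_cases (a i) with ⟨e, _⟩ | ⟨e, _⟩ <;> rcases abs_cases (a j) with ⟨e', _⟩ | ⟨e', _⟩ <;>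
        constructor <;> intro h <;> omega
    · rw [bseq_odd hkn]
      constructor
      · intro h
        have h' : a (k + 1) = a i := by omega
        have := a_eq_iff hs (by omega) (by omega) hi (le_trans hij hj) h'
        omega
      · intro h
        exact hane j (k + 1) (le_trans hi hij) hj (by omega) (by omega) (by omega)
  -- membership / ne to v,w as subtype facts
  have hnev : ∀ (z : Jpm n) (t : ℤ), (z : ℤ) = t → t ≠ -a i → t ≠ a j → c z = z := by
    intro z t hz h1 h2
    rw [hc]
    apply Equiv.swap_apply_of_ne_of_ne
    · intro h; rw [h] at hz; rw [hv] at hz; exact h1 hz.symm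
    · intro h; rw [h] at hz; rw [hw] at hz; exact h2 hz.symm
  -- the main pointwise computation, first component only
  have main : ∀ k ≤ n, ∀ x y : Jpm n,
      (x : ℤ) = bseq n a' (2 * k) → (y : ℤ) = bseq n a' (2 * k + 1) →
      (c * θ * c) x = y := by
    intro k hk x y hx hy
    rw [Equiv.Perm.mul_apply, Equiv.Perm.mul_apply]
    have hcases : k + 1 < i ∨ k + 1 = i ∨ (i ≤ k ∧ k < j) ∨ k = j ∨ j < k := by omega
    rcases hcases with h | h | ⟨h1, h2⟩ | h | h
    -- Case 1 : entirely left of the reversed window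
    · have hx2 : (x : ℤ) = bseq n a (2 * k) := by
        rw [hx, ha']
        exact bseq_even_congr hk (by simp only [reversal]; rw [if_neg (by omega)])
      have hy2 : (y : ℤ) = bseq n a (2 * k + 1) := by
        rw [hy, ha']
        exact bseq_odd_congr hk (fun _ => by simp only [reversal]; rw [if_neg (by omega)])
      have hθxy := (hθ k hk x y hx2 hy2).1
      rw [hnev x _ hx2 (hne_even k hk (by omega)).1 (hne_even k hk (by omega)).2, hθxy,
        hnev y _ hy2 (hne_odd k hk (by omega)).1 (hne_odd k hk (by omega)).2]
    -- Case 2 : k + 1 = i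
    · have hkn : k < n := by omega
      have hx2 : (x : ℤ) = bseq n a (2 * k) := by
        rw [hx, ha']
        exact bseq_even_congr hk (by simp only [reversal]; rw [if_neg (by omega)])
      have hyw : y = w := by
        apply Subtype.ext
        rw [hy, hw, ha', bseq_odd hkn]
        simp only [reversal]
        rw [if_pos ⟨by omega, by omega⟩, show i + j - (k + 1) = j by omega]
        ring
      have hvv : (v : ℤ) = bseq n a (2 * k + 1) := by
        rw [hv, bseq_odd hkn, show k + 1 = i by omega]
      have hθxv := (hθ k hk x v hx2 hvv).1
      rw [hnev x _ hx2 (hne_even k hk (by omega)).1 (hne_even k hk (by omega)).2, hθxv, hc,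
        Equiv.swap_apply_left, hyw]
    -- Case 3 : i ≤ k < j
    · set m := i + j - k with hm
      have hm1 : i + 1 ≤ m := by omega
      have hm2 : m ≤ j := by omega
      have hk1 : 1 ≤ k := by omega
      have hkn : k < n := by omega
      have hx2 : (x : ℤ) = -a m := by
        rw [hx, ha', bseq_even hk1 hk]
        simp only [reversal]
        rw [if_pos ⟨by omega, by omega⟩]
      have hy2 : (y : ℤ) = a (m - 1) := by
        rw [hy, ha', bseq_odd hkn]
        simp only [reversal]
        rw [if_pos ⟨by omega, by omega⟩, show i + j - (k + 1) = m - 1 by omega]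
        ring
      set x' : Jpm n := ⟨a (m - 1), memA hs (by omega) (by omega)⟩ with hx'
      have hbx' : (x' : ℤ) = bseq n a (2 * (m - 1)) := by
        rw [bseq_even (by omega) (by omega)]
      have hbx : (x : ℤ) = bseq n a (2 * (m - 1) + 1) := by
        rw [bseq_odd (by omega : m - 1 < n), show m - 1 + 1 = m by omega, hx2]
      have hθx := (hθ (m - 1) (by omega) x' x hbx' hbx).2
      have hcx : c x = x := by
        apply hnev x _ hx2
        · intro h
          have h' : a m = a i := by omega
          have := a_eq_iff hs (by omega) (by omega) hi (le_trans hij hj) h'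
          omega
        · intro h
          exact hane j m (le_trans hi hij) hj (by omega) (by omega) (by omega)
      have hcx' : c x' = x' := by
        apply hnev x' _ rfl
        · show a (m - 1) ≠ -a i
          exact hane (m - 1) i (by omega) (by omega) hi (le_trans hij hj)
        · show a (m - 1) ≠ a j
          intro h
          have := a_eq_iff hs (by omega) (by omega) (le_trans hi hij) hj h
          omega
      rw [hcx, hθx, hcx']
      apply Subtype.ext
      rw [hy2]
    -- Case 4 : k = j
    · have hxv : x = v := by
        apply Subtype.ext
        rw [hx, hv, ha', h, bseq_even (le_trans hi hij) hj]
        simp only [reversal]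
        rw [if_pos ⟨hij, le_refl j⟩, show i + j - j = i by omega]
      have hy2 : (y : ℤ) = bseq n a (2 * j + 1) := by
        rw [hy, ha', h]
        exact bseq_odd_congr hj (fun hjn => by simp only [reversal]; rw [if_neg (by omega)])
      have hbw : (w : ℤ) = bseq n a (2 * j) := by
        rw [hw, bseq_even (le_trans hi hij) hj]
      have hθwy := (hθ j hj w y hbw hy2).1
      rw [hxv, hc, Equiv.swap_apply_left, ← hc, hθwy,
        hnev y _ hy2 (hne_odd j hj (by omega)).1 (hne_odd j hj (by omega)).2]
    -- Case 5 : j < k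
    · have hk1 : 1 ≤ k := by omega
      have hx2 : (x : ℤ) = bseq n a (2 * k) := by
        rw [hx, ha']
        exact bseq_even_congr hk (by simp only [reversal]; rw [if_neg (by omega)])
      have hy2 : (y : ℤ) = bseq n a (2 * k + 1) := by
        rw [hy, ha']
        exact bseq_odd_congr hk (fun _ => by simp only [reversal]; rw [if_neg (by omega)])
      have hθxy := (hθ k hk x y hx2 hy2).1
      rw [hnev x _ hx2 (hne_even k hk (by omega)).1 (hne_even k hk (by omega)).2, hθxy,
        hnev y _ hy2 (hne_odd k hk (by omega)).1 (hne_odd k hk (by omega)).2]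
  -- assemble both components using involutivity
  have hs' : IsSignedPerm n a' := revSigned hs hi hij hj
  have hinv : ∀ z, (c * θ * c) ((c * θ * c) z) = z := by
    intro z
    simp only [Equiv.Perm.mul_apply, hc, Equiv.swap_apply_self]
    rw [pairs_invol hs hθ]
    exact Equiv.swap_apply_self _ _ _
  intro k hk x y hx hy
  refine ⟨main k hk x y hx hy, ?_⟩
  rw [← main k hk x y hx hy]
  exact hinv x

end PR

section FIN
variable {n : ℕ}

lemma pairsId (hn : 1 ≤ n) {a : ℕ → ℤ} (hfin : ∀ k, 1 ≤ k → k ≤ n → a k = (k : ℤ))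
    (θ₂ : Equiv.Perm (Jpm n)) (hθ₂ : ∀ x : Jpm n, (θ₂ x : ℤ) = -(x : ℤ) - 1) :
    Pairs n a θ₂ := by
  intro k hk x y hx hy
  have hxval : (x : ℤ) = (k : ℤ) := by
    rcases Nat.eq_zero_or_pos k with rfl | hk1
    · rw [hx]; simp [bseq]
    · rw [hx, bseq_even hk1 hk, hfin k hk1 hk]
  have hyval : (y : ℤ) = -(k : ℤ) - 1 := by
    rcases eq_or_lt_of_le hk with rfl | hkn
    · rw [hy, bseq_last]; ring
    · rw [hy, bseq_odd hkn, hfin (k + 1) (by omega) (by omega)]; push_cast; ring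
  constructor
  · apply Subtype.ext; rw [hθ₂ x, hxval, hyval]
  · apply Subtype.ext; rw [hθ₂ y, hyval, hxval]; ring

lemma theta2_sq (θ₂ : Equiv.Perm (Jpm n)) (hθ₂ : ∀ x : Jpm n, (θ₂ x : ℤ) = -(x : ℤ) - 1) :
    θ₂ * θ₂ = 1 := by
  apply Equiv.ext
  intro x
  apply Subtype.ext
  rw [Equiv.Perm.mul_apply, hθ₂, hθ₂, Equiv.Perm.one_apply]
  ring

lemma card_Jpm : Nat.card (Jpm n) = 2 * n + 2 := by
  rw [Nat.card_eq_finsetCard, Int.card_Icc]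
  omega

end FIN

/-- On `[n]± ∪ {-(n+1)}`, let `θ₂` be the fixed-point-free involution
`(0,-1)(1,-2)⋯(n,-n-1)`, i.e. `θ₂(x) = -x-1`, and let `θ₁` be the fixed-point-free
involution `(b₀,b₁)(b₂,b₃)⋯(b_{2n},b_{2n+1})`, for a signed permutation `a`.  Then the
reversal distance of `a` satisfies `d_r(a) ≥ (2n + 2 - C(θ₁ ∘ θ₂)) / 2`, i.e. every `d`
such that `a` is sortable in `d` reversals satisfies `2n + 2 ≤ 2d + C(θ₁ ∘ θ₂)`. -/
theorem stmt_9 (n : ℕ) (hn : 1 ≤ n) (a : ℕ → ℤ) (hsigned : IsSignedPerm n a)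
    (θ₁ θ₂ : Equiv.Perm (Jpm n))
    (hθ₂ : ∀ x : Jpm n, (θ₂ x : ℤ) = -(x : ℤ) - 1)
    (hθ₁ : ∀ k ≤ n, ∀ x y : Jpm n,
      (x : ℤ) = bseq n a (2 * k) → (y : ℤ) = bseq n a (2 * k + 1) →
      θ₁ x = y ∧ θ₁ y = x) :
    ∀ d : ℕ, SortsIn n a d → 2 * n + 2 ≤ 2 * d + cycleCount (θ₁ * θ₂) := by
  have hθ₂sq : θ₂ * θ₂ = 1 := theta2_sq θ₂ hθ₂
  intro d hd
  obtain ⟨l, hlen, hvalid, hfinal⟩ := hd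
  subst hlen
  have key : ∀ (l : List (ℕ × ℕ)) (a : ℕ → ℤ), IsSignedPerm n a →
      ∀ θ : Equiv.Perm (Jpm n), Pairs n a θ →
      (∀ q ∈ l, 1 ≤ q.1 ∧ q.1 ≤ q.2 ∧ q.2 ≤ n) →
      (∀ k, 1 ≤ k → k ≤ n → (l.foldl (fun f q => reversal q.1 q.2 f) a) k = (k : ℤ)) →
      2 * n + 2 ≤ 2 * l.length + cycleCount (θ * θ₂) := by
    intro l
    induction l with
    | nil =>
      intro a ha θ hθ _ hfin
      simp only [List.foldl_nil] at hfin
      have hθeq : θ = θ₂ := pairs_apply ha hθ (pairsId hn hfin θ₂ hθ₂)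
      rw [hθeq, hθ₂sq, List.length_nil]
      have h1 : cycleCount (1 : Equiv.Perm (Jpm n)) = 2 * n + 2 := by
        rw [cycleCount_one, ← Nat.card_eq_fintype_card, card_Jpm]
      omega
    | cons q l ih =>
      intro a ha θ hθ hvalid hfin
      obtain ⟨hq1, hq12, hq2⟩ := hvalid q List.mem_cons_self
      set v : Jpm n := ⟨-a q.1, memNA ha hq1 (le_trans hq12 hq2)⟩ with hvdef
      set w : Jpm n := ⟨a q.2, memA ha (le_trans hq1 hq12) hq2⟩ with hwdef
      set θ' := Equiv.swap v w * θ * Equiv.swap v w with hθ'def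
      have ha' : IsSignedPerm n (reversal q.1 q.2 a) := revSigned ha hq1 hq12 hq2
      have hθ'p : Pairs n (reversal q.1 q.2 a) θ' :=
        pairs_step ha hq1 hq12 hq2 hθ v w rfl rfl
      have hih := ih (reversal q.1 q.2 a) ha' θ' hθ'p
          (fun p hp => hvalid p (List.mem_cons_of_mem q hp))
          (by intro k h1 h2; simpa [List.foldl_cons] using hfin k h1 h2)
      have hmul : θ' * θ₂ =
          Equiv.swap v w * ((θ * θ₂) * Equiv.swap (θ₂⁻¹ v) (θ₂⁻¹ w)) := by
        have hswθ : Equiv.swap v w * θ₂ = θ₂ * Equiv.swap (θ₂⁻¹ v) (θ₂⁻¹ w) :=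
          Equiv.swap_mul_eq_mul_swap θ₂ v w
        calc θ' * θ₂ = Equiv.swap v w * θ * (Equiv.swap v w * θ₂) := by
              rw [hθ'def]; group
          _ = Equiv.swap v w * θ * (θ₂ * Equiv.swap (θ₂⁻¹ v) (θ₂⁻¹ w)) := by rw [hswθ]
          _ = Equiv.swap v w * ((θ * θ₂) * Equiv.swap (θ₂⁻¹ v) (θ₂⁻¹ w)) := by group
      have hbound : cycleCount (θ' * θ₂) ≤ cycleCount (θ * θ₂) + 2 := by
        calc cycleCount (θ' * θ₂)
            = cycleCount (Equiv.swap v w * ((θ * θ₂) * Equiv.swap (θ₂⁻¹ v) (θ₂⁻¹ w))) := by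
              rw [hmul]
          _ ≤ cycleCount ((θ * θ₂) * Equiv.swap (θ₂⁻¹ v) (θ₂⁻¹ w)) + 1 :=
              cycleCount_swap_mul_le _ _ _
          _ ≤ (cycleCount (θ * θ₂) + 1) + 1 :=
              Nat.add_le_add_right (cycleCount_mul_swap_le _ _ _) 1
          _ = cycleCount (θ * θ₂) + 2 := by omega
      simp only [List.length_cons]
      omega
  exact key l a hsigned θ₁ hθ₁ hvalid hfinal
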